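/- Let $T \geq 1$, $\lambda > 0$, and let $K_T$ be the $T \times T$ matrix with $[K_T]_{ij} = \min(i,j)$. Then the effective dimension satisfies $\mathrm{Tr}\big(K_T (\lambda I + K_T)^{-1}\big) \leq \frac{\pi T}{2\sqrt{\lambda}}$. -/

import Mathlib

open Real Matrix Finset

noncomputable def edbKf (i j : ℕ) : ℝ := ((min (i+1) (j+1) : ℕ) : ℝ)

noncomputable def edbBf (T i j : ℕ) : ℝ :=
  (if i = j then 2 else 0) - (if i + 1 = j then 1 else 0)
    - (if i = j + 1 then 1 else 0) - (if i = j ∧ j + 1 = T then 1 else 0)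

noncomputable def edbK (T : ℕ) : Matrix (Fin T) (Fin T) ℝ := Matrix.of fun i j => edbKf i.val j.val
noncomputable def edbB (T : ℕ) : Matrix (Fin T) (Fin T) ℝ := Matrix.of fun i j => edbBf T i.val j.val
noncomputable def edbTh (T k : ℕ) : ℝ := (2*k+1) * Real.pi / (2*T+1)
noncomputable def edbNu (T k : ℕ) : ℝ := 2 - 2 * Real.cos (edbTh T k)
noncomputable def edbV (T : ℕ) : Matrix (Fin T) (Fin T) ℝ :=
  Matrix.of fun i k => Real.sin ((i.val+1) * edbTh T k.val)

lemma edb_sum_pick {T : ℕ} (f : ℕ → ℝ) (n : ℕ) :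
    (∑ m ∈ Finset.range T, if m = n then f m else 0) = if n < T then f n else 0 := by
  simp [Finset.sum_ite_eq', Finset.mem_range]

lemma edb_entry (T iv jv : ℕ) (hi : iv < T) (hj : jv < T) :
    2 * edbKf iv jv - (if 1 ≤ jv then edbKf iv (jv-1) else 0)
      - ((if jv+1 < T then edbKf iv (jv+1) else 0) - (-(if jv+1 = T then edbKf iv jv else 0)))
    = if iv = jv then 1 else 0 := by
  unfold edbKf
  rcases Nat.lt_or_ge jv 1 with hj0 | hj1
  · obtain rfl : jv = 0 := by omega
    rw [if_neg (by omega)]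
    rcases eq_or_lt_of_le (show 0+1 ≤ T by omega) with hT1 | hT2
    · obtain rfl : iv = 0 := by omega
      rw [if_neg (by omega), if_pos hT1, if_pos rfl]
      norm_num
    · rw [if_pos hT2, if_neg (by omega)]
      rcases Nat.lt_or_ge iv 1 with hi0 | hi1
      · obtain rfl : iv = 0 := by omega
        rw [if_pos rfl]
        norm_num
      · rw [if_neg (by omega), show min (iv+1) (0+1) = 1 from by omega,
          show min (iv+1) (0+1+1) = 2 from by omega]
        norm_num
  · rw [if_pos hj1]
    rcases eq_or_lt_of_le (show jv+1 ≤ T by omega) with hT1 | hT2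
    · rw [if_neg (by omega), if_pos hT1]
      rcases Nat.lt_or_ge iv jv with hij | hij
      · rw [if_neg (by omega), show min (iv+1) (jv+1) = iv+1 from by omega,
          show min (iv+1) (jv-1+1) = iv+1 from by omega]
        push_cast; ring
      · obtain rfl : iv = jv := by omega
        rw [if_pos rfl, show min (iv+1) (iv+1) = iv+1 from by omega,
          show min (iv+1) (iv-1+1) = iv from by omega]
        push_cast [show 1 ≤ iv from hj1]; ring
    · rw [if_pos hT2, if_neg (by omega)]
      rcases Nat.lt_or_ge iv jv with hij | hij
      · rw [if_neg (by omega), show min (iv+1) (jv+1) = iv+1 from by omega,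
          show min (iv+1) (jv-1+1) = iv+1 from by omega,
          show min (iv+1) (jv+1+1) = iv+1 from by omega]
        push_cast; ring
      · rcases eq_or_lt_of_le hij with h2 | h2
        · obtain rfl : iv = jv := h2.symm
          rw [if_pos rfl, show min (iv+1) (iv+1) = iv+1 from by omega,
            show min (iv+1) (iv-1+1) = iv from by omega,
            show min (iv+1) (iv+1+1) = iv+1 from by omega]
          push_cast [show 1 ≤ iv from hj1]; ring
        · rw [if_neg (by omega), show min (iv+1) (jv+1) = jv+1 from by omega,
            show min (iv+1) (jv-1+1) = jv from by omega,
            show min (iv+1) (jv+1+1) = jv+2 from by omega]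
          push_cast [show 1 ≤ jv from hj1]; ring

lemma edb_KB (T : ℕ) : edbK T * edbB T = 1 := by
  ext i j
  rw [Matrix.mul_apply]
  simp only [edbK, edbB, Matrix.of_apply]
  rw [Fin.sum_univ_eq_sum_range (fun m => edbKf i.val m * edbBf T m j.val)]
  have hi : i.val < T := i.isLt
  have hj : j.val < T := j.isLt
  have expand : ∀ m, edbKf i.val m * edbBf T m j.val
      = ((if m = j.val then 2 * edbKf i.val m else 0)
        - (if m + 1 = j.val then edbKf i.val m else 0))
        - ((if m = j.val + 1 then edbKf i.val m else 0)
        - (- (if m = j.val ∧ j.val + 1 = T then edbKf i.val m else 0))) := by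
    intro m
    simp only [edbBf]
    split_ifs <;> ring
  simp only [expand]
  rw [Finset.sum_sub_distrib, Finset.sum_sub_distrib, Finset.sum_sub_distrib,
    Finset.sum_neg_distrib]
  have e1 : (∑ m ∈ range T, if m = j.val then 2 * edbKf i.val m else 0)
      = 2 * edbKf i.val j.val := by
    rw [edb_sum_pick, if_pos hj]
  have e2 : (∑ m ∈ range T, if m + 1 = j.val then edbKf i.val m else 0)
      = if 1 ≤ j.val then edbKf i.val (j.val - 1) else 0 := by
    rcases h : j.val with _ | n
    · simp
    · simp only [add_left_inj]
      rw [edb_sum_pick, if_pos (by omega), if_pos (by omega)]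
      simp
  have e3 : (∑ m ∈ range T, if m = j.val + 1 then edbKf i.val m else 0)
      = if j.val + 1 < T then edbKf i.val (j.val+1) else 0 := edb_sum_pick _ _
  have e4 : (∑ m ∈ range T, if m = j.val ∧ j.val + 1 = T then edbKf i.val m else 0)
      = if j.val + 1 = T then edbKf i.val j.val else 0 := by
    by_cases hl : j.val + 1 = T
    · simp only [hl, and_true, if_pos hl]
      rw [edb_sum_pick, if_pos hj]
      simp
    · simp [hl]
  rw [e1, e2, e3, e4, edb_entry T i.val j.val hi hj, Matrix.one_apply]
  simp [Fin.ext_iff]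

lemma edb_idA (θ x : ℝ) :
    Real.sin (x*θ) + Real.sin ((x+2)*θ) = 2 * Real.cos θ * Real.sin ((x+1)*θ) := by
  have h1 : x*θ = (x+1)*θ - θ := by ring
  have h2 : (x+2)*θ = (x+1)*θ + θ := by ring
  rw [h1, h2, Real.sin_add, Real.sin_sub]; ring

lemma edb_idB (T k : ℕ) :
    Real.sin (((T:ℝ)+1) * edbTh T k) = Real.sin ((T:ℝ) * edbTh T k) := by
  have hden : (2*(T:ℝ)+1) ≠ 0 := by positivity
  have h : ((T:ℝ)+1) * edbTh T k = (2*(k:ℝ)+1)*Real.pi - (T:ℝ) * edbTh T k := by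
    unfold edbTh; field_simp; ring
  rw [h, Real.sin_sub]
  have hs : Real.sin ((2*(k:ℝ)+1)*Real.pi) = 0 := by
    have := Real.sin_nat_mul_pi (2*k+1)
    push_cast at this
    convert this using 2
  have hc : Real.cos ((2*(k:ℝ)+1)*Real.pi) = -1 := by
    have := Real.cos_nat_mul_two_pi_add_pi k
    rw [← this]
    congr 1
    push_cast
    ring
  rw [hs, hc]; ring

lemma edb_BV (T : ℕ) :
    edbB T * edbV T = edbV T * Matrix.diagonal (fun k : Fin T => edbNu T k.val) := by
  ext i k
  rw [Matrix.mul_apply, Matrix.mul_diagonal]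
  simp only [edbB, edbV, Matrix.of_apply, edbNu]
  set θ := edbTh T k.val with hθ
  rw [Fin.sum_univ_eq_sum_range (fun l => edbBf T i.val l * Real.sin ((l+1) * θ))]
  have hi : i.val < T := i.isLt
  have expand : ∀ l, edbBf T i.val l * Real.sin ((l+1) * θ)
      = ((if i.val = l then 2 * Real.sin ((l+1)*θ) else 0)
        - (if i.val + 1 = l then Real.sin ((l+1)*θ) else 0))
        - ((if i.val = l + 1 then Real.sin ((l+1)*θ) else 0)
        - (-(if i.val = l ∧ l + 1 = T then Real.sin ((l+1)*θ) else 0))) := by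
    intro l
    simp only [edbBf]
    split_ifs <;> ring
  simp only [expand]
  rw [Finset.sum_sub_distrib, Finset.sum_sub_distrib, Finset.sum_sub_distrib,
    Finset.sum_neg_distrib]
  have e1 : (∑ m ∈ range T, if i.val = m then 2 * Real.sin ((m+1)*θ) else 0)
      = 2 * Real.sin ((i.val+1)*θ) := by
    simp only [@eq_comm ℕ i.val]
    rw [edb_sum_pick, if_pos hi]
  have e2 : (∑ m ∈ range T, if i.val + 1 = m then Real.sin ((m+1)*θ) else 0)
      = if i.val + 1 < T then Real.sin ((((i.val+1 : ℕ) : ℝ)+1)*θ) else 0 := by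
    simp only [@eq_comm ℕ (i.val+1)]
    exact edb_sum_pick _ _
  have e3 : (∑ m ∈ range T, if i.val = m + 1 then Real.sin ((m+1)*θ) else 0)
      = if 1 ≤ i.val then Real.sin ((((i.val-1 : ℕ) : ℝ)+1)*θ) else 0 := by
    rcases h : i.val with _ | n
    · simp
    · have : ∀ m : ℕ, (if n + 1 = m + 1 then Real.sin ((m+1)*θ) else 0)
          = (if m = n then Real.sin ((m+1)*θ) else 0) := by
        intro m
        split_ifs with h1 h2 <;> first | rfl | omega
      simp only [this]
      rw [edb_sum_pick, if_pos (by omega), if_pos (by omega)]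
      simp
  have e4 : (∑ m ∈ range T, if i.val = m ∧ m + 1 = T then Real.sin ((m+1)*θ) else 0)
      = if i.val + 1 = T then Real.sin ((((i.val : ℕ) : ℝ)+1)*θ) else 0 := by
    by_cases hl : i.val + 1 = T
    · rw [if_pos hl]
      have : ∀ m : ℕ, (if i.val = m ∧ m + 1 = T then Real.sin ((m+1)*θ) else 0)
          = (if m = i.val then Real.sin ((m+1)*θ) else 0) := by
        intro m
        split_ifs with h1 h2 <;> first | rfl | omega
      simp only [this]
      rw [edb_sum_pick, if_pos hi]
    · rw [if_neg hl]
      apply Finset.sum_eq_zero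
      intro m _
      rw [if_neg]
      rintro ⟨rfl, h⟩
      omega
  rw [e1, e2, e3, e4]
  -- now pure scalar trigonometry
  have idA := edb_idA θ (i.val : ℝ)
  have hc2 : ((i.val : ℕ) : ℝ) + 2 = ((i.val+1 : ℕ) : ℝ) + 1 := by push_cast; ring
  rcases eq_or_lt_of_le (show i.val+1 ≤ T from hi) with hlast | hlt
  · -- last row
    rw [if_neg (show ¬ (i.val + 1 < T) by omega), if_pos hlast]
    have hcT : ((i.val : ℕ) : ℝ) + 1 = (T : ℝ) := by exact_mod_cast hlast
    have h2 : Real.sin ((((i.val : ℕ) : ℝ)+2)*θ) = Real.sin ((((i.val : ℕ) : ℝ)+1)*θ) := by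
      rw [show (((i.val : ℕ) : ℝ))+2 = (T:ℝ)+1 from by linarith,
        show (((i.val : ℕ) : ℝ))+1 = (T:ℝ) from hcT]
      exact edb_idB T k.val
    rcases Nat.lt_or_ge i.val 1 with h0 | h1
    · rw [if_neg (show ¬ (1 ≤ i.val) by omega)]
      have hs0 : Real.sin (((i.val : ℕ) : ℝ)*θ) = 0 := by
        rw [show ((i.val : ℕ) : ℝ) = 0 from by exact_mod_cast (show i.val = 0 by omega)]
        simp
      linarith [idA, h2, hs0]
    · rw [if_pos (show 1 ≤ i.val from h1)]
      have hm1 : ((i.val-1 : ℕ) : ℝ) + 1 = ((i.val : ℕ) : ℝ) := by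
        push_cast [h1]; ring
      rw [hm1]
      linarith [idA, h2]
  · rw [if_pos hlt, if_neg (show ¬ (i.val + 1 = T) by omega), ← hc2]
    rcases Nat.lt_or_ge i.val 1 with h0 | h1
    · rw [if_neg (show ¬ (1 ≤ i.val) by omega)]
      have hs0 : Real.sin (((i.val : ℕ) : ℝ)*θ) = 0 := by
        rw [show ((i.val : ℕ) : ℝ) = 0 from by exact_mod_cast (show i.val = 0 by omega)]
        simp
      linarith [idA, hs0]
    · rw [if_pos (show 1 ≤ i.val from h1)]
      have hm1 : ((i.val-1 : ℕ) : ℝ) + 1 = ((i.val : ℕ) : ℝ) := by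
        push_cast [h1]; ring
      rw [hm1]
      linarith [idA]

lemma edbTh_pos {T k : ℕ} (h : k < T) : 0 < edbTh T k := by
  unfold edbTh
  have := Real.pi_pos
  positivity

lemma edbTh_lt_pi {T k : ℕ} (h : k < T) : edbTh T k < Real.pi := by
  unfold edbTh
  rw [div_lt_iff₀ (by positivity)]
  have := Real.pi_pos
  have hk : (k:ℝ) ≤ (T:ℝ) - 1 := by
    have : (k:ℝ) + 1 ≤ T := by exact_mod_cast h
    linarith
  nlinarith

lemma edb_sin_half_pos {T k : ℕ} (h : k < T) : 0 < Real.sin (edbTh T k / 2) := by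
  apply Real.sin_pos_of_pos_of_lt_pi
  · have := edbTh_pos h; linarith
  · have := edbTh_lt_pi h; have := Real.pi_pos; linarith

lemma edb_nu_eq {T k : ℕ} : edbNu T k = 4 * Real.sin (edbTh T k / 2) ^ 2 := by
  have := Real.sin_sq_eq_half_sub (edbTh T k / 2)
  rw [show 2 * (edbTh T k / 2) = edbTh T k from by ring] at this
  unfold edbNu
  linarith

lemma edb_nu_pos {T k : ℕ} (h : k < T) : 0 < edbNu T k := by
  rw [edb_nu_eq]
  have := edb_sin_half_pos h
  positivity

lemma edb_nu_inj (T : ℕ) : Function.Injective (fun k : Fin T => edbNu T k.val) := by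
  intro k l h
  simp only [edbNu] at h
  have hc : Real.cos (edbTh T k.val) = Real.cos (edbTh T l.val) := by linarith
  have hmem : ∀ m : Fin T, edbTh T m.val ∈ Set.Icc 0 Real.pi := fun m =>
    ⟨(edbTh_pos m.isLt).le, (edbTh_lt_pi m.isLt).le⟩
  have hth : edbTh T k.val = edbTh T l.val := Real.injOn_cos (hmem k) (hmem l) hc
  unfold edbTh at hth
  field_simp at hth
  exact Fin.ext (by exact_mod_cast (show (k.val:ℝ) = l.val by linarith))

lemma edb_V_isUnit (T : ℕ) : IsUnit (edbV T) := by
  rw [← Matrix.linearIndependent_cols_iff_isUnit]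
  have h := Module.End.eigenvectors_linearIndependent' (Matrix.mulVecLin (edbB T))
    (fun k : Fin T => edbNu T k.val) (edb_nu_inj T)
    (fun k => fun i => edbV T i k) ?_
  · exact h
  · intro k
    constructor
    · rw [Module.End.mem_eigenspace_iff]
      funext i
      show (edbB T).mulVec (fun i => edbV T i k) i = _
      have : (edbB T).mulVec (fun i => edbV T i k) i = (edbB T * edbV T) i k := by
        rw [Matrix.mul_apply, Matrix.mulVec]
        rfl
      rw [this, edb_BV, Matrix.mul_diagonal]
      simp [mul_comm]
    · intro hzero
      have hT0 : 0 < T := k.pos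
      have h00 := congrFun hzero ⟨0, hT0⟩
      have hpos : 0 < Real.sin (edbTh T k.val) :=
        Real.sin_pos_of_pos_of_lt_pi (edbTh_pos k.isLt) (edbTh_lt_pi k.isLt)
      simp only [edbV, Matrix.of_apply, Pi.zero_apply] at h00
      norm_num at h00
      linarith


lemma edb_trace (T : ℕ) (lam : ℝ) (hlam : 0 < lam) :
    (edbK T * (lam • (1 : Matrix (Fin T) (Fin T) ℝ) + edbK T)⁻¹).trace
      = ∑ k : Fin T, (1 + lam * edbNu T k.val)⁻¹ := by
  classical
  have hKB := edb_KB T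
  have hBK : edbB T * edbK T = 1 := mul_eq_one_comm.mp hKB
  have hVu := edb_V_isUnit T
  have hdet : IsUnit (edbV T).det := (Matrix.isUnit_iff_isUnit_det _).mp hVu
  have hVW : edbV T * (edbV T)⁻¹ = 1 := Matrix.mul_nonsing_inv _ hdet
  have hWV : (edbV T)⁻¹ * edbV T = 1 := Matrix.nonsing_inv_mul _ hdet
  set g : Fin T → ℝ := fun k => 1 + lam * edbNu T k.val with hg
  have hgpos : ∀ k, 0 < g k := fun k => by
    have hn := edb_nu_pos k.isLt
    simp only [hg]
    nlinarith
  have hdiag : (1 : Matrix (Fin T) (Fin T) ℝ)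
      + lam • Matrix.diagonal (fun k : Fin T => edbNu T k.val) = Matrix.diagonal g := by
    rw [← Matrix.diagonal_one, ← Matrix.diagonal_smul, ← Matrix.diagonal_add]
    rfl
  have hMV : ((1 : Matrix (Fin T) (Fin T) ℝ) + lam • edbB T) * edbV T
      = edbV T * Matrix.diagonal g := by
    rw [Matrix.add_mul, Matrix.one_mul, Matrix.smul_mul, edb_BV, ← hdiag,
      Matrix.mul_add, Matrix.mul_one, Matrix.mul_smul]
  have hGinv : Matrix.diagonal g * Matrix.diagonal (fun k => (g k)⁻¹) = 1 := by
    have hfun2 : (fun k => g k * (g k)⁻¹) = fun _ : Fin T => (1:ℝ) := by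
      funext k; exact mul_inv_cancel₀ (hgpos k).ne'
    rw [Matrix.diagonal_mul_diagonal, hfun2, Matrix.diagonal_one]
  have hMinv : ((1 : Matrix (Fin T) (Fin T) ℝ) + lam • edbB T)
      * (edbV T * Matrix.diagonal (fun k => (g k)⁻¹) * (edbV T)⁻¹) = 1 := by
    rw [← Matrix.mul_assoc, ← Matrix.mul_assoc, hMV, Matrix.mul_assoc (edbV T), hGinv,
      Matrix.mul_one, hVW]
  have hA : lam • (1 : Matrix (Fin T) (Fin T) ℝ) + edbK T
      = ((1 : Matrix (Fin T) (Fin T) ℝ) + lam • edbB T) * edbK T := by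
    rw [Matrix.add_mul, Matrix.one_mul, Matrix.smul_mul, hBK, add_comm]
  have hKinv : (edbK T)⁻¹ = edbB T := Matrix.inv_eq_right_inv hKB
  have hMinv' : ((1 : Matrix (Fin T) (Fin T) ℝ) + lam • edbB T)⁻¹
      = edbV T * Matrix.diagonal (fun k => (g k)⁻¹) * (edbV T)⁻¹ :=
    Matrix.inv_eq_right_inv hMinv
  have hfinal : edbK T * (lam • (1 : Matrix (Fin T) (Fin T) ℝ) + edbK T)⁻¹
      = edbV T * Matrix.diagonal (fun k => (g k)⁻¹) * (edbV T)⁻¹ := by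
    rw [hA, Matrix.mul_inv_rev, hKinv, ← Matrix.mul_assoc, hKB, Matrix.one_mul, hMinv']
  rw [hfinal, Matrix.trace_mul_comm, ← Matrix.mul_assoc, hWV, Matrix.one_mul,
    Matrix.trace_diagonal]

lemma edb_arctan_slope {x y : ℝ} (hx : 0 ≤ x) (hxy : x < y) :
    (y - x) / (1 + y^2) ≤ Real.arctan y - Real.arctan x := by
  obtain ⟨c, hc, hceq⟩ := exists_hasDerivAt_eq_slope Real.arctan (fun t => 1/(1+t^2)) hxy
    (Real.continuous_arctan.continuousOn) (fun t _ => Real.hasDerivAt_arctan t)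
  have hcy : c^2 ≤ y^2 := by nlinarith [hc.1, hc.2]
  have h1 : (0:ℝ) < 1 + c^2 := by positivity
  have h2 : (0:ℝ) < 1 + y^2 := by positivity
  have h3 : 1/(1+y^2) ≤ 1/(1+c^2) := by
    apply one_div_le_one_div_of_le h1
    linarith
  have h4 : Real.arctan y - Real.arctan x = (y - x) * (1/(1+c^2)) := by
    rw [hceq, mul_comm, div_mul_cancel₀ _ (sub_ne_zero.mpr hxy.ne')]
  rw [h4, div_eq_mul_one_div]
  exact mul_le_mul_of_nonneg_left h3 (by linarith)

lemma edb_sum_bound (T : ℕ) (hT : 1 ≤ T) (lam : ℝ) (hlam : 0 < lam) :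
    ∑ k : Fin T, (1 + lam * edbNu T k.val)⁻¹ ≤ Real.pi * T / (2 * Real.sqrt lam) := by
  have hpi := Real.pi_pos
  set s := Real.sqrt lam with hs
  have hspos : 0 < s := Real.sqrt_pos.mpr hlam
  have hs2 : s^2 = lam := Real.sq_sqrt hlam.le
  set b : ℝ := 2*s/(2*(T:ℝ)+1) with hb
  have hTpos : (0:ℝ) < 2*(T:ℝ)+1 := by positivity
  have hbpos : 0 < b := by positivity
  have hb2 : b^2 = 4*lam/((2*(T:ℝ)+1)^2) := by
    rw [hb, div_pow, mul_pow, hs2]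
    norm_num
  have hterm : ∀ k : Fin T,
      (1 + lam * edbNu T k.val)⁻¹ ≤ (1 + b^2*(2*(k.val:ℝ)+1)^2)⁻¹ := by
    intro k
    have h1 : (2*(k.val:ℝ)+1)/(2*(T:ℝ)+1) ≤ Real.sin (edbTh T k.val / 2) := by
      have hle : edbTh T k.val / 2 ≤ Real.pi / 2 := by
        have := edbTh_lt_pi k.isLt
        linarith
      have h0 : 0 ≤ edbTh T k.val / 2 := by
        have := edbTh_pos k.isLt
        linarith
      have hms := Real.mul_le_sin h0 hle
      calc (2*(k.val:ℝ)+1)/(2*(T:ℝ)+1) = 2/Real.pi * (edbTh T k.val / 2) := by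
            unfold edbTh
            field_simp
        _ ≤ _ := hms
    have hsin := edb_sin_half_pos k.isLt
    have hsq : ((2*(k.val:ℝ)+1)/(2*(T:ℝ)+1))^2 ≤ Real.sin (edbTh T k.val / 2)^2 := by
      apply pow_le_pow_left₀ (by positivity) h1
    have key := mul_le_mul_of_nonneg_left hsq (show (0:ℝ) ≤ 4*lam by positivity)
    have h2 : b^2*(2*(k.val:ℝ)+1)^2 ≤ lam * edbNu T k.val := by
      rw [edb_nu_eq]
      calc b^2*(2*(k.val:ℝ)+1)^2 = 4*lam*(((2*(k.val:ℝ)+1)/(2*(T:ℝ)+1))^2) := by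
            rw [hb2, div_pow]
            field_simp
        _ ≤ 4*lam*Real.sin (edbTh T k.val / 2)^2 := key
        _ = lam * (4 * Real.sin (edbTh T k.val /2)^2) := by ring
    have hp1 : (0:ℝ) < 1 + b^2*(2*(k.val:ℝ)+1)^2 := by positivity
    exact inv_anti₀ hp1 (by linarith)
  have hsum1 : ∑ k : Fin T, (1 + lam * edbNu T k.val)⁻¹
      ≤ ∑ k : Fin T, (1 + b^2*(2*(k.val:ℝ)+1)^2)⁻¹ :=
    Finset.sum_le_sum (fun k _ => hterm k)
  have hsum2 : ∑ k : Fin T, (1 + b^2*(2*(k.val:ℝ)+1)^2)⁻¹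
      = ∑ m ∈ Finset.range T, (1 + b^2*(2*(m:ℝ)+1)^2)⁻¹ :=
    Fin.sum_univ_eq_sum_range (fun m => (1 + b^2*(2*(m:ℝ)+1)^2)⁻¹) T
  obtain ⟨T', rfl⟩ : ∃ T', T = T' + 1 := ⟨T-1, by omega⟩
  rw [hsum2, Finset.sum_range_succ'] at hsum1
  set A := Real.arctan b with hA
  have hA0 : 0 ≤ A := by
    rw [hA, ← Real.arctan_zero]
    exact Real.arctan_strictMono.monotone hbpos.le
  set F : ℕ → ℝ := fun m => Real.arctan (b*(2*(m:ℝ)+1)) with hF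
  have hstep : ∀ m ∈ Finset.range T', (1 + b^2*(2*((m+1 : ℕ):ℝ)+1)^2)⁻¹
      ≤ (F (m+1) - F m)/(2*b) := by
    intro m _
    have hx : 0 ≤ b*(2*(m:ℝ)+1) := by positivity
    have hxy : b*(2*(m:ℝ)+1) < b*(2*((m+1:ℕ):ℝ)+1) := by
      push_cast
      nlinarith
    have hslope := edb_arctan_slope hx hxy
    have harg : b*(2*((m+1:ℕ):ℝ)+1) - b*(2*(m:ℝ)+1) = 2*b := by
      push_cast
      ring
    rw [harg] at hslope
    have hy2 : (1 + (b*(2*((m+1:ℕ):ℝ)+1))^2) = (1 + b^2*(2*((m+1:ℕ):ℝ)+1)^2) := by ring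
    rw [hy2] at hslope
    rw [le_div_iff₀ (by positivity)]
    have hp : (0:ℝ) < 1 + b^2*(2*((m+1:ℕ):ℝ)+1)^2 := by positivity
    rw [div_le_iff₀ hp] at hslope
    calc (1 + b^2*(2*((m+1:ℕ):ℝ)+1)^2)⁻¹ * (2*b)
        = 2*b / (1 + b^2*(2*((m+1:ℕ):ℝ)+1)^2) := by ring
      _ ≤ F (m+1) - F m := by
          rw [div_le_iff₀ hp]
          exact hslope
  have htail : ∑ m ∈ Finset.range T', (1 + b^2*(2*((m+1:ℕ):ℝ)+1)^2)⁻¹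
      ≤ (F T' - A)/(2*b) := by
    calc ∑ m ∈ Finset.range T', (1 + b^2*(2*((m+1:ℕ):ℝ)+1)^2)⁻¹
        ≤ ∑ m ∈ Finset.range T', (F (m+1) - F m)/(2*b) := Finset.sum_le_sum hstep
      _ = (∑ m ∈ Finset.range T', (F (m+1) - F m))/(2*b) := by
          rw [Finset.sum_div]
      _ = (F T' - F 0)/(2*b) := by rw [Finset.sum_range_sub F T']
      _ = (F T' - A)/(2*b) := by
          congr 1
          rw [hF, hA]
          norm_num
  have hFT : F T' ≤ Real.pi/2 := (Real.arctan_lt_pi_div_two _).le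
  have htail2 : (F T' - A)/(2*b) ≤ (Real.pi/2 - A)/(2*b) := by
    gcongr
  have hzero : (1 + b^2*(2*((0:ℕ):ℝ)+1)^2)⁻¹ = (1+b^2)⁻¹ := by
    norm_num
  rw [hzero] at hsum1
  have hb2b : (1+b^2)⁻¹ + (Real.pi/2 - A)/(2*b) ≤ (2*Real.pi/3)/(2*b) := by
    rcases le_or_gt A (Real.pi/6) with hcase | hcase
    · have h5 : b/(1+b^2) ≤ A := by
        have := edb_arctan_slope (le_refl 0) hbpos
        rw [Real.arctan_zero] at this
        rw [hA]
        calc b/(1+b^2) = (b-0)/(1+b^2) := by norm_num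
          _ ≤ Real.arctan b - 0 := this
          _ = Real.arctan b := by ring
      have h6 : (1+b^2)⁻¹ ≤ A/b := by
        rw [le_div_iff₀ hbpos]
        calc (1+b^2)⁻¹ * b = b/(1+b^2) := by ring
          _ ≤ A := h5
      calc (1+b^2)⁻¹ + (Real.pi/2 - A)/(2*b)
          ≤ A/b + (Real.pi/2 - A)/(2*b) := by linarith
        _ = (Real.pi/2 + A)/(2*b) := by
            field_simp
            ring
        _ ≤ (2*Real.pi/3)/(2*b) := by
            gcongr
            linarith
    · have h2b : 2*b ≤ 1+b^2 := by nlinarith [sq_nonneg (b-1)]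
      have h7 : (1+b^2)⁻¹ ≤ 1/(2*b) := by
        rw [inv_eq_one_div]
        exact one_div_le_one_div_of_le (by positivity) h2b
      have hA2 : A < Real.pi/2 := Real.arctan_lt_pi_div_two b
      have hpi3 : (1:ℝ) ≤ Real.pi/3 := by
        have := Real.pi_gt_three
        linarith
      calc (1+b^2)⁻¹ + (Real.pi/2 - A)/(2*b)
          ≤ 1/(2*b) + (Real.pi/2 - A)/(2*b) := by linarith
        _ = (1 + Real.pi/2 - A)/(2*b) := by
            field_simp
            ring
        _ ≤ (2*Real.pi/3)/(2*b) := by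
            gcongr
            linarith
  have hlaststep : (2*Real.pi/3)/(2*b) ≤ Real.pi * (T'+1:ℕ) / (2*s) := by
    have hbT : b * (2*((T'+1:ℕ):ℝ)+1) = 2*s := by
      rw [hb]
      field_simp
    have hT1 : (1:ℝ) ≤ ((T'+1:ℕ):ℝ) := by exact_mod_cast hT
    rw [← hbT, div_le_div_iff₀ (by positivity) (by positivity)]
    have hX : (2*((T'+1:ℕ):ℝ)+1) ≤ 3*((T'+1:ℕ):ℝ) := by push_cast; linarith
    have h9 := mul_le_mul_of_nonneg_left hX (show (0:ℝ) ≤ 2*Real.pi/3*b by positivity)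
    calc 2*Real.pi/3*(b*(2*((T'+1:ℕ):ℝ)+1)) = 2*Real.pi/3*b*(2*((T'+1:ℕ):ℝ)+1) := by ring
      _ ≤ 2*Real.pi/3*b*(3*((T'+1:ℕ):ℝ)) := h9
      _ = Real.pi * ((T'+1:ℕ):ℝ) * (2*b) := by ring
  linarith [hsum1, htail, htail2, hb2b, hlaststep]


/-- Effective-dimension bound for the spline kernel matrix `[K_T]_{ij} = min(i,j)`:
`Tr(K_T (λI + K_T)⁻¹) ≤ πT / (2√λ)`. -/
theorem effective_dimension_bound (T : ℕ) (hT : 1 ≤ T) (lam : ℝ) (hlam : 0 < lam)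
    (K : Matrix (Fin T) (Fin T) ℝ)
    (hK : ∀ i j, K i j = min (i.val + 1 : ℝ) (j.val + 1)) :
    (K * (lam • (1 : Matrix (Fin T) (Fin T) ℝ) + K)⁻¹).trace
      ≤ Real.pi * T / (2 * Real.sqrt lam) := by
  have hKm : K = edbK T := by
    ext i j
    rw [hK]
    simp only [edbK, Matrix.of_apply, edbKf]
    push_cast [Nat.cast_min]
    rfl
  rw [hKm]
  calc (edbK T * (lam • (1 : Matrix (Fin T) (Fin T) ℝ) + edbK T)⁻¹).trace
      = ∑ k : Fin T, (1 + lam * edbNu T k.val)⁻¹ := edb_trace T lam hlam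
    _ ≤ Real.pi * T / (2 * Real.sqrt lam) := edb_sum_bound T hT lam hlam
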